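/- arXiv:1904.03503 — 6 statements merged into one kernel-verified Lean document; each statement's English description precedes it below -/
import Mathlib

section
/- Let K be a number field and n ≥ 1 an integer. Let S be a subring of the matrix ring M_n(K) such that S is commutative and every nonzero element of S has a multiplicative inverse lying in S (i.e. S is a field), and such that the dimension of S as a ℚ-vector space equals n·[K:ℚ]. Then S is equal to its own centralizer in M_n(K); in particular, every scalar matrix k·1 with k ∈ K belongs to S. -/
open scoped Matrix

set_option maxHeartbeats 1000000
set_option synthInstance.maxHeartbeats 400000

/-- Let `K` be a number field and `n ≥ 1`. Let `S` be a subring of the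
matrix ring `Mₙ(K)` which is a `ℚ`-subspace (automatic for a subring that is a field,
so we take it to be a `ℚ`-subalgebra), commutative, in which every nonzero element has
a multiplicative inverse lying in `S`, and whose dimension as a `ℚ`-vector space equals
`n·[K:ℚ]`. Then `S` equals its own centralizer in `Mₙ(K)`; in particular every scalar
matrix `k·1` with `k ∈ K` belongs to `S`. -/
theorem subfield_of_matrix_ring_is_self_centralizing
    (K : Type*) [Field K] [NumberField K] (n : ℕ) (hn : 1 ≤ n)
    (S : Subalgebra ℚ (Matrix (Fin n) (Fin n) K))
    (hcomm : ∀ a ∈ S, ∀ b ∈ S, a * b = b * a)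
    (hinv : ∀ a ∈ S, a ≠ 0 → ∃ b ∈ S, a * b = 1)
    (hdim : Module.finrank ℚ S = n * Module.finrank ℚ K) :
    Subalgebra.centralizer ℚ (S : Set (Matrix (Fin n) (Fin n) K)) = S ∧
      ∀ k : K, Matrix.scalar (Fin n) k ∈ S := by
  haveI : Nonempty (Fin n) := ⟨⟨0, hn⟩⟩
  set M := Matrix (Fin n) (Fin n) K with hM
  -- S is a field
  have hfield : IsField S := by
    refine ⟨⟨0, 1, fun h => one_ne_zero (α := M) (congrArg Subtype.val h).symm⟩,
      fun a b => Subtype.ext (hcomm a a.2 b b.2), ?_⟩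
    intro a ha
    obtain ⟨b, hb, hab⟩ := hinv a a.2 (fun h => ha (Subtype.ext h))
    exact ⟨⟨b, hb⟩, Subtype.ext hab⟩
  letI : Field S := hfield.toField
  -- the S-module structure on V = Fin n → K
  let V := Fin n → K
  let φ : S →+* Module.End K V :=
    (Matrix.toLinAlgEquiv' : M ≃ₐ[K] Module.End K V).toAlgHom.toRingHom.comp
      (S.val : S →ₐ[ℚ] M).toRingHom
  letI : Module S V := Module.compHom V φ
  have hsmul : ∀ (s : S) (w : V), s • w = (s : M) *ᵥ w := fun s w => rfl
  haveI : IsScalarTower ℚ S V := ⟨by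
    intro q s w
    rw [hsmul, hsmul]
    show ((q • s : S) : M) *ᵥ w = q • ((s : M) *ᵥ w)
    rw [Subalgebra.coe_smul, Matrix.smul_mulVec]⟩
  haveI : Module.Finite S V := Module.Finite.of_restrictScalars_finite ℚ S V
  have hV : Module.finrank ℚ V = n * Module.finrank ℚ K := by
    simp [V, Module.finrank_pi_fintype, Finset.sum_const]
  have htower : Module.finrank ℚ S * Module.finrank S V = Module.finrank ℚ V :=
    Module.finrank_mul_finrank ℚ S V
  have hSpos : 0 < Module.finrank ℚ S := Module.finrank_pos
  have h1 : Module.finrank S V = 1 := by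
    have : Module.finrank ℚ S * Module.finrank S V = Module.finrank ℚ S * 1 := by
      rw [mul_one, htower, hV, hdim]
    exact Nat.eq_of_mul_eq_mul_left hSpos this
  let b : Module.Basis (Fin 1) S V := Module.finBasisOfFinrankEq S V h1
  set v : V := b 0 with hv
  have hspan : ∀ w : V, ∃ s : S, w = s • v := by
    intro w
    refine ⟨b.repr w 0, ?_⟩
    have := b.sum_repr w
    rwa [Fin.sum_univ_one, eq_comm] at this
  -- centralizer ≤ S
  have hle : Subalgebra.centralizer ℚ (S : Set M) ≤ S := by
    intro c hc
    rw [Subalgebra.mem_centralizer_iff] at hc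
    obtain ⟨t, ht⟩ := hspan (c *ᵥ v)
    rw [hsmul] at ht
    have hceq : c = (t : M) := by
      have key : ∀ w : V, c *ᵥ w = (t : M) *ᵥ w := by
        intro w
        obtain ⟨s, hs⟩ := hspan w
        rw [hs, hsmul, Matrix.mulVec_mulVec, Matrix.mulVec_mulVec, ← hc s s.2,
          ← Matrix.mulVec_mulVec, ht, Matrix.mulVec_mulVec,
          hcomm _ s.2 _ t.2]
      have := Matrix.toLinAlgEquiv'.injective (R := K) (LinearMap.ext (fun w => by
        simpa [Matrix.toLinAlgEquiv'_apply, Matrix.mulVecLin_apply] using key w))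
      exact this
    rw [hceq]; exact t.2
  have hge : S ≤ Subalgebra.centralizer ℚ (S : Set M) := by
    intro a ha
    rw [Subalgebra.mem_centralizer_iff]
    exact fun g hg => hcomm g hg a ha
  have heq : Subalgebra.centralizer ℚ (S : Set M) = S := le_antisymm hle hge
  refine ⟨heq, fun k => ?_⟩
  rw [← heq, Subalgebra.mem_centralizer_iff]
  intro g _
  exact (Matrix.scalar_commute k (fun r => mul_comm k r) g).symm
end

section
/- Let L be a number field, Γ an order of L, K ⊆ L a subfield with ring of integers O_K, n = [L:K], and R = M_n(O_K). Then for every unital ring homomorphism ρ: Γ → R there exists a unique ring homomorphism φ: K → L such that ρ is φ-compatible. -/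
open NumberField

private lemma exists_int_smul_mem {L : Type*} [Field L] [CharZero L] (Γ : Subring L)
    (hΓspan : Submodule.span ℚ (Γ : Set L) = ⊤) (x : L) :
    ∃ m : ℤ, m ≠ 0 ∧ m • x ∈ Γ := by
  have hx : x ∈ Submodule.span ℚ (Γ : Set L) := hΓspan ▸ Submodule.mem_top
  induction hx using Submodule.span_induction with
  | mem y hy => exact ⟨1, one_ne_zero, by simpa using hy⟩
  | zero => exact ⟨1, one_ne_zero, by simpa using Γ.zero_mem⟩
  | add y z _ _ hy hz =>
    obtain ⟨a, ha, hay⟩ := hy; obtain ⟨b, hb, hbz⟩ := hz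
    refine ⟨a * b, mul_ne_zero ha hb, ?_⟩
    have h : (a * b) • (y + z) = b • (a • y) + a • (b • z) := by
      rw [smul_add, smul_smul, smul_smul, mul_comm b a]
    rw [h]
    exact Γ.add_mem (zsmul_mem hay b) (zsmul_mem hbz a)
  | smul q y _ hy =>
    obtain ⟨a, ha, hay⟩ := hy
    refine ⟨(q.den : ℤ) * a, mul_ne_zero (Int.natCast_ne_zero.mpr q.den_nz) ha, ?_⟩
    have hden : (q.den : ℚ) ≠ 0 := Nat.cast_ne_zero.mpr q.den_nz
    have hq : (q.den : ℚ) * q = (q.num : ℚ) := by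
      rw [mul_comm, Rat.mul_den_eq_num]
    have h : ((q.den : ℤ) * a) • (q • y) = q.num • (a • y) := by
      rw [← Int.cast_smul_eq_zsmul ℚ, ← Int.cast_smul_eq_zsmul ℚ,
        ← Int.cast_smul_eq_zsmul ℚ, smul_smul, smul_smul]
      congr 1
      push_cast
      rw [mul_right_comm, hq]
    rw [h]
    exact zsmul_mem hay q.num


private lemma inv_smul_eq_of_zsmul_eq {A : Type*} [AddCommGroup A] [Module ℚ A]
    {a b : ℤ} (ha : a ≠ 0) (hb : b ≠ 0) {x y : A} (h : b • x = a • y) :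
    (a : ℚ)⁻¹ • x = (b : ℚ)⁻¹ • y := by
  have ha' : (a : ℚ) ≠ 0 := Int.cast_ne_zero.mpr ha
  have hb' : (b : ℚ) ≠ 0 := Int.cast_ne_zero.mpr hb
  have h' : (b : ℚ) • x = (a : ℚ) • y := by
    rw [Int.cast_smul_eq_zsmul, Int.cast_smul_eq_zsmul]; exact h
  have hx : x = (b : ℚ)⁻¹ • ((a : ℚ) • y) := by rw [← h', inv_smul_smul₀ hb']
  rw [hx, smul_smul, smul_smul, mul_right_comm, inv_mul_cancel₀ ha', one_mul]

private lemma inv_smul_add_zsmul {A : Type*} [AddCommGroup A] [Module ℚ A]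
    {a b : ℤ} (ha : a ≠ 0) (hb : b ≠ 0) (x y : A) :
    ((a * b : ℤ) : ℚ)⁻¹ • (b • x + a • y) = (a : ℚ)⁻¹ • x + (b : ℚ)⁻¹ • y := by
  have ha' : (a : ℚ) ≠ 0 := Int.cast_ne_zero.mpr ha
  have hb' : (b : ℚ) ≠ 0 := Int.cast_ne_zero.mpr hb
  rw [← Int.cast_smul_eq_zsmul ℚ b x, ← Int.cast_smul_eq_zsmul ℚ a y, smul_add,
    smul_smul, smul_smul]
  congr 1
  · congr 1
    push_cast
    rw [mul_inv, mul_assoc, inv_mul_cancel₀ hb', mul_one]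
  · congr 1
    push_cast
    rw [mul_inv, mul_comm ((a:ℚ))⁻¹, mul_assoc, inv_mul_cancel₀ ha', mul_one]

private lemma exists_ringHom_extension {L A : Type*} [Field L] [CharZero L] [Ring A]
    [Algebra ℚ A] (Γ : Subring L) (hΓspan : Submodule.span ℚ (Γ : Set L) = ⊤)
    (ρ' : Γ →+* A) : ∃ F : L →+* A, ∀ γ : Γ, F (γ : L) = ρ' γ := by
  classical
  choose d hd hmem using fun x => exists_int_smul_mem Γ hΓspan x
  have key : ∀ (x : L) (m : ℤ), m ≠ 0 → ∀ h : m • x ∈ Γ,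
      ((d x : ℚ))⁻¹ • ρ' ⟨d x • x, hmem x⟩ = (m : ℚ)⁻¹ • ρ' ⟨m • x, h⟩ := by
    intro x m hm h
    have e : m • (⟨d x • x, hmem x⟩ : Γ) = d x • (⟨m • x, h⟩ : Γ) := by
      ext
      push_cast
      rw [smul_comm]
    have e2 := congrArg ρ' e
    rw [map_zsmul, map_zsmul] at e2
    exact inv_smul_eq_of_zsmul_eq (hd x) hm e2
  have hdq : ∀ x : L, ((d x : ℚ)) ≠ 0 := fun x => Int.cast_ne_zero.mpr (hd x)
  set f : L → A := fun x => ((d x : ℚ))⁻¹ • ρ' ⟨d x • x, hmem x⟩ with hfdef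
  have hf : ∀ (x : L) (m : ℤ), m ≠ 0 → ∀ h : m • x ∈ Γ,
      f x = (m : ℚ)⁻¹ • ρ' ⟨m • x, h⟩ := fun x m hm h => key x m hm h
  refine ⟨{ toFun := f,
            map_one' := ?_, map_mul' := ?_, map_zero' := ?_, map_add' := ?_ }, ?_⟩
  · have h1 : (1 : ℤ) • (1 : L) ∈ Γ := by simpa using Γ.one_mem
    show f 1 = 1
    rw [hf 1 1 one_ne_zero h1]
    have h2 : (⟨(1:ℤ) • (1:L), h1⟩ : Γ) = 1 := by ext; simp
    rw [h2, map_one]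
    simp
  · intro x y
    have hxy : (d x * d y) • (x * y) ∈ Γ := by
      have h : (d x * d y) • (x * y) = (d x • x) * (d y • y) :=
        (smul_mul_smul_comm (d x) x (d y) y).symm
      rw [h]; exact Γ.mul_mem (hmem x) (hmem y)
    show f (x*y) = f x * f y
    rw [hf (x*y) (d x * d y) (mul_ne_zero (hd x) (hd y)) hxy, hfdef]
    simp only
    have h2 : (⟨(d x * d y) • (x * y), hxy⟩ : Γ) = ⟨d x • x, hmem x⟩ * ⟨d y • y, hmem y⟩ := by
      ext
      push_cast
      rw [smul_mul_smul_comm]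
    rw [h2, map_mul, smul_mul_smul_comm]
    congr 1
    push_cast
    rw [mul_inv]
  · have h1 : (1 : ℤ) • (0 : L) ∈ Γ := by simpa using Γ.zero_mem
    show f 0 = 0
    rw [hf 0 1 one_ne_zero h1]
    have h2 : (⟨(1:ℤ) • (0:L), h1⟩ : Γ) = 0 := by ext; simp
    rw [h2, map_zero, smul_zero]
  · intro x y
    have hxy : (d x * d y) • (x + y) ∈ Γ := by
      have h : (d x * d y) • (x + y) = d y • (d x • x) + d x • (d y • y) := by
        rw [smul_add, smul_smul, smul_smul, mul_comm (d y) (d x)]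
      rw [h]
      exact Γ.add_mem (zsmul_mem (hmem x) (d y)) (zsmul_mem (hmem y) (d x))
    show f (x+y) = f x + f y
    rw [hf (x+y) (d x * d y) (mul_ne_zero (hd x) (hd y)) hxy, hfdef]
    simp only
    have h2 : (⟨(d x * d y) • (x + y), hxy⟩ : Γ)
        = d y • ⟨d x • x, hmem x⟩ + d x • ⟨d y • y, hmem y⟩ := by
      ext
      push_cast
      rw [smul_add, smul_smul, smul_smul, mul_comm (d y) (d x)]
    rw [h2, map_add, map_zsmul, map_zsmul]
    exact inv_smul_add_zsmul (hd x) (hd y) _ _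
  · intro γ
    have h1 : (1 : ℤ) • (γ : L) ∈ Γ := by simpa using γ.2
    show f (γ : L) = ρ' γ
    rw [hf γ 1 one_ne_zero h1]
    have h2 : (⟨(1:ℤ) • (γ : L), h1⟩ : Γ) = γ := by ext; simp
    rw [h2]
    simp


/-- A ring homomorphism `ρ : Γ → Mₙ(O_K)` is `φ`-compatible for a ring homomorphism
`φ : K → L` if there is a `ℚ`-algebra homomorphism `σ : L → Mₙ(K)` with `σ(γ) = ρ(γ)`
for all `γ ∈ Γ` and `σ(φ(k))` equal to the scalar matrix `k·1` for all `k ∈ K`. -/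
def IsCompatible (L K : Type*) [Field L] [NumberField L] [Field K] [NumberField K]
    (n : ℕ) (Γ : Subring L) (φ : K →+* L)
    (ρ : Γ →+* Matrix (Fin n) (Fin n) (𝓞 K)) : Prop :=
  ∃ σ : L →ₐ[ℚ] Matrix (Fin n) (Fin n) K,
    (∀ γ : Γ, σ (γ : L) = (ρ γ).map (algebraMap (𝓞 K) K)) ∧
    ∀ k : K, σ (φ k) = Matrix.scalar (Fin n) k

/-- Let `L` be a number field, `Γ` an order of `L` (a subring which is
finitely generated as a `ℤ`-module and spans `L` over `ℚ`), `K ⊆ L` a subfield with ring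
of integers `O_K`, `n = [L:K]`, and `R = Mₙ(O_K)`. Then every unital ring homomorphism
`ρ : Γ → R` is `φ`-compatible for a unique ring homomorphism `φ : K → L`. -/
theorem existsUnique_compatible_ringHom
    (L K : Type*) [Field L] [NumberField L] [Field K] [NumberField K] [Algebra K L]
    (Γ : Subring L) (hΓfin : Module.Finite ℤ Γ)
    (hΓspan : Submodule.span ℚ (Γ : Set L) = ⊤)
    (n : ℕ) (hn : n = Module.finrank K L)
    (ρ : Γ →+* Matrix (Fin n) (Fin n) (𝓞 K)) :
    ∃! φ : K →+* L, IsCompatible L K n Γ φ ρ := by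
  classical
  have hn0 : 0 < n := hn ▸ Module.finrank_pos
  set ρ' : Γ →+* Matrix (Fin n) (Fin n) K := ((algebraMap (𝓞 K) K).mapMatrix).comp ρ with hρ'def
  obtain ⟨F, hF⟩ := exists_ringHom_extension Γ hΓspan ρ'
  set σ : L →ₐ[ℚ] Matrix (Fin n) (Fin n) K := F.toRatAlgHom with hσdef
  have hσF : ∀ x, σ x = F x := fun x => rfl
  haveI : Nonempty (Fin n) := ⟨⟨0, hn0⟩⟩
  have hFinj : Function.Injective F := F.injective
  set v₀ : Fin n → K := fun _ => 1 with hv₀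
  have hv₀ne : v₀ ≠ 0 := fun h => one_ne_zero (congrFun h ⟨0, hn0⟩)
  set μ : L →ₗ[ℚ] (Fin n → K) :=
    { toFun := fun x => (F x).mulVec v₀
      map_add' := fun x y => by
        show (F (x + y)).mulVec v₀ = (F x).mulVec v₀ + (F y).mulVec v₀
        rw [map_add, Matrix.add_mulVec]
      map_smul' := fun q x => by
        show (F (q • x)).mulVec v₀ = q • (F x).mulVec v₀
        rw [← hσF, map_smul, hσF, Matrix.smul_mulVec] } with hμdef
  have hμ : ∀ x, μ x = (F x).mulVec v₀ := fun x => rfl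
  have hμ0 : ∀ x : L, μ x = 0 → x = 0 := by
    intro x hx
    by_contra hx0
    have h1 : F x⁻¹ * F x = 1 := by rw [← map_mul, inv_mul_cancel₀ hx0, map_one]
    apply hv₀ne
    calc v₀ = (1 : Matrix (Fin n) (Fin n) K).mulVec v₀ := (Matrix.one_mulVec v₀).symm
      _ = (F x⁻¹ * F x).mulVec v₀ := by rw [h1]
      _ = (F x⁻¹).mulVec ((F x).mulVec v₀) := (Matrix.mulVec_mulVec v₀ (F x⁻¹) (F x)).symm
      _ = (F x⁻¹).mulVec 0 := by rw [← hμ, hx]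
      _ = 0 := Matrix.mulVec_zero _
  have hμinj : Function.Injective μ := by
    rw [← LinearMap.ker_eq_bot]
    exact LinearMap.ker_eq_bot'.mpr hμ0
  have hdim : Module.finrank ℚ L = Module.finrank ℚ (Fin n → K) := by
    rw [← Module.finrank_mul_finrank ℚ K L, ← hn, Module.finrank_pi_fintype ℚ,
      Finset.sum_const, Finset.card_univ, Fintype.card_fin, smul_eq_mul, mul_comm]
  have hμsurj : Function.Surjective μ :=
    (LinearMap.injective_iff_surjective_of_finrank_eq_finrank hdim).mp hμinj
  have key : ∀ k : K, ∃ x : L, F x = Matrix.scalar (Fin n) k := by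
    intro k
    obtain ⟨x, hx⟩ := hμsurj (k • v₀)
    refine ⟨x, ?_⟩
    have hvec : ∀ v : Fin n → K, (F x).mulVec v = k • v := by
      intro v
      obtain ⟨y, hy⟩ := hμsurj v
      calc (F x).mulVec v = (F x).mulVec ((F y).mulVec v₀) := by rw [← hμ, hy]
        _ = (F x * F y).mulVec v₀ := Matrix.mulVec_mulVec v₀ (F x) (F y)
        _ = (F y * F x).mulVec v₀ := by rw [← map_mul, ← map_mul, mul_comm]
        _ = (F y).mulVec ((F x).mulVec v₀) := (Matrix.mulVec_mulVec v₀ (F y) (F x)).symm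
        _ = (F y).mulVec (k • v₀) := by rw [← hμ, hx]
        _ = k • (F y).mulVec v₀ := Matrix.mulVec_smul (F y) k v₀
        _ = k • v := by rw [← hμ, hy]
    ext i j
    have h := congrFun (hvec (Pi.single j 1)) i
    rw [Matrix.mulVec_single] at h
    simp only [Matrix.col_apply, MulOpposite.op_one, one_smul, Pi.smul_apply] at h
    rw [h]
    simp [Matrix.scalar_apply, Matrix.diagonal, Pi.single_apply, eq_comm]
  choose ψ hψ using key
  set φ : K →+* L :=
    { toFun := ψ
      map_one' := hFinj (by rw [hψ, map_one, map_one])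
      map_mul' := fun a b => hFinj (by rw [hψ, map_mul, map_mul, hψ, hψ])
      map_zero' := hFinj (by rw [hψ, map_zero, map_zero])
      map_add' := fun a b => hFinj (by rw [hψ, map_add, map_add, hψ, hψ]) } with hφdef
  have hσΓ : ∀ γ : Γ, σ (γ : L) = (ρ γ).map (algebraMap (𝓞 K) K) := by
    intro γ
    rw [hσF, hF]
    rfl
  refine ⟨φ, ⟨σ, hσΓ, fun k => by rw [hσF]; exact hψ k⟩, ?_⟩
  rintro φ' ⟨σ', h1', h2'⟩
  have hσ' : σ' = σ := by
    refine AlgHom.toLinearMap_injective (LinearMap.ext_on hΓspan ?_)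
    intro x hx
    show σ' x = σ x
    rw [show x = ((⟨x, hx⟩ : Γ) : L) from rfl, h1' ⟨x, hx⟩, hσΓ ⟨x, hx⟩]
  ext k
  apply hFinj
  rw [← hσF, ← hσF, ← hσ']
  rw [h2' k, hσ', hσF]
  exact (hψ k).symm
end

section
/- Let L be a number field, Γ an order of L, K ⊆ L a subfield with ring of integers O_K, n = [L:K], and R = M_n(O_K). Fix a ring homomorphism φ: K → L. Then there exists an injective map from the set of φ-compatible ring homomorphisms Γ → R modulo conjugation by units of R into the set C_Γ of equivalence classes of fractional ideals of Γ. (Conjugation by a unit of R preserves φ-compatibility, so this quotient is well defined.) -/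
open NumberField

/-- Two unital ring homomorphisms `A → B` are conjugate if they differ by conjugation
by a unit of `B`. -/
def ConjRel (A B : Type*) [Ring A] [Ring B] (ρ ρ' : A →+* B) : Prop :=
  ∃ u : Bˣ, ∀ a : A, ρ' a = ↑u * ρ a * ↑u⁻¹

/-- The fractional ideals of a subring `Γ` of a field `L`: the nonzero finitely
generated `Γ`-submodules of `L`. -/
def FractionalIdealOf (L : Type*) [Field L] (Γ : Subring L) : Type _ :=
  {I : Submodule Γ L // I ≠ ⊥ ∧ I.FG}

/-- Two fractional ideals `I, I'` of `Γ` are equivalent if `I' = x·I` for some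
nonzero `x ∈ L`.  `C_Γ` is the `Quot` of this relation. -/
def FracIdealRel (L : Type*) [Field L] (Γ : Subring L)
    (I I' : FractionalIdealOf L Γ) : Prop :=
  ∃ x : L, x ≠ 0 ∧ ∀ y : L, y ∈ I'.1 ↔ ∃ z ∈ I.1, y = x * z

namespace CompatAux

open Matrix

variable {L K : Type*} [Field L] [NumberField L] [Field K] [NumberField K]
variable {n : ℕ} {Γ : Subring L} {φ : K →+* L}

/-- The image of the ring of integers inside `K`. -/
noncomputable def Pr (K : Type*) [Field K] [NumberField K] : Subring K :=
  (algebraMap (𝓞 K) K).range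

/-- The column map `y ↦ (σ y) ⬝ e_{j0}`. -/
def colMap (σ : L →ₐ[ℚ] Matrix (Fin n) (Fin n) K) (j0 : Fin n) :
    L →ₗ[ℚ] (Fin n → K) where
  toFun y := fun i => σ y i j0
  map_add' a b := by funext i; simp [Matrix.add_apply]
  map_smul' q a := by
    funext i
    show σ (q • a) i j0 = q • σ a i j0
    rw [show σ (q • a) = q • σ a from σ.toLinearMap.map_smul q a]
    rfl

lemma colMap_mul (σ : L →ₐ[ℚ] Matrix (Fin n) (Fin n) K) (j0 : Fin n) (y z : L) :
    colMap σ j0 (y * z) = (σ y) *ᵥ (colMap σ j0 z) := by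
  funext i
  simp [colMap, Matrix.mul_apply, Matrix.mulVec, dotProduct]

lemma colMap_single (σ : L →ₐ[ℚ] Matrix (Fin n) (Fin n) K) (j0 : Fin n) (y : L) :
    (σ y) *ᵥ Pi.single j0 1 = colMap σ j0 y := by
  funext i
  simp [colMap]

lemma colMap_smulK (σ : L →ₐ[ℚ] Matrix (Fin n) (Fin n) K) (j0 : Fin n)
    (hσφ : ∀ k : K, σ (φ k) = Matrix.scalar (Fin n) k) (k : K) (y : L) :
    colMap σ j0 (φ k * y) = k • colMap σ j0 y := by
  rw [colMap_mul, hσφ]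
  funext i
  simp [Matrix.scalar, Matrix.mulVec_diagonal]

lemma colMap_injective (σ : L →ₐ[ℚ] Matrix (Fin n) (Fin n) K) (j0 : Fin n) :
    Function.Injective (colMap σ j0) := by
  rw [← LinearMap.ker_eq_bot, eq_bot_iff]
  intro y hy
  rw [LinearMap.mem_ker] at hy
  rw [Submodule.mem_bot]
  by_contra hy0
  have h1 : σ y⁻¹ * σ y = 1 := by rw [← _root_.map_mul, inv_mul_cancel₀ hy0, _root_.map_one]
  have h2 := congrArg (fun M => M *ᵥ Pi.single j0 (1 : K)) h1
  simp only [← Matrix.mulVec_mulVec, colMap_single, hy, Matrix.mulVec_zero,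
    Matrix.one_mulVec] at h2
  have h3 := congrFun h2 j0
  rw [Pi.single_eq_same] at h3
  exact one_ne_zero h3.symm


lemma colMap_bijective (σ : L →ₐ[ℚ] Matrix (Fin n) (Fin n) K) (j0 : Fin n)
    (hcard : Module.finrank ℚ L = Module.finrank ℚ (Fin n → K)) :
    Function.Bijective (colMap σ j0) :=
  ⟨colMap_injective σ j0,
    (LinearMap.injective_iff_surjective_of_finrank_eq_finrank hcard).mp
      (colMap_injective σ j0)⟩

/-- The lattice `O_K^n` as a `ℤ`-submodule of `K^n`. -/
noncomputable def Lam (K : Type*) [Field K] [NumberField K] (n : ℕ) :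
    Submodule ℤ (Fin n → K) where
  carrier := {w | ∀ i, w i ∈ Pr K}
  add_mem' ha hb i := add_mem (ha i) (hb i)
  zero_mem' i := zero_mem _
  smul_mem' c w hw i := by
    have := zsmul_mem (hw i) c
    simpa using this

lemma lam_fg : (Lam K n).FG := by
  classical
  set PrM : Submodule ℤ K :=
    LinearMap.range ((Algebra.linearMap (𝓞 K) K).restrictScalars ℤ) with hPrM
  have hfg : PrM.FG := by
    have h1 : (⊤ : Submodule ℤ (𝓞 K)).FG := Module.finite_def.mp inferInstance
    have h2 := h1.map ((Algebra.linearMap (𝓞 K) K).restrictScalars ℤ)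
    rwa [Submodule.map_top] at h2
  have heq : Lam K n = Submodule.pi Set.univ (fun _ : Fin n => PrM) := by
    ext w
    simp only [Submodule.mem_pi, Set.mem_univ, forall_true_left]
    constructor
    · intro h i
      obtain ⟨a, ha⟩ := h i
      exact ⟨a, ha⟩
    · intro h i
      obtain ⟨a, ha⟩ := h i
      exact ⟨a, ha⟩
  rw [heq]
  exact Submodule.fg_pi fun _ => hfg


variable (ρ : Γ →+* Matrix (Fin n) (Fin n) (𝓞 K))

lemma mulVec_mem_lam {M : Matrix (Fin n) (Fin n) K}
    (hM : ∀ i j, M i j ∈ Pr K) {w : Fin n → K} (hw : ∀ i, w i ∈ Pr K) :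
    ∀ i, (M *ᵥ w) i ∈ Pr K := by
  intro i
  simp only [Matrix.mulVec, dotProduct]
  exact sum_mem fun l _ => mul_mem (hM i l) (hw l)

/-- The fractional ideal attached to a compatible representation. -/
def idealOf (σ : L →ₐ[ℚ] Matrix (Fin n) (Fin n) K) (j0 : Fin n)
    (hσρ : ∀ γ : Γ, σ (γ : L) = (ρ γ).map (algebraMap (𝓞 K) K)) :
    Submodule Γ L where
  carrier := {y | ∀ i, colMap σ j0 y i ∈ Pr K}
  add_mem' := by
    intro a b ha hb i
    rw [map_add]
    exact add_mem (ha i) (hb i)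
  zero_mem' := by
    intro i
    rw [map_zero]
    exact zero_mem _
  smul_mem' := by
    intro γ y hy
    have hsmul : (γ • y : L) = (γ : L) * y := rfl
    show ∀ i, colMap σ j0 (γ • y) i ∈ Pr K
    rw [hsmul, colMap_mul σ j0]
    apply mulVec_mem_lam _ hy
    intro i j
    rw [hσρ γ]
    exact ⟨ρ γ i j, rfl⟩

lemma mem_idealOf {σ : L →ₐ[ℚ] Matrix (Fin n) (Fin n) K} {j0 : Fin n}
    {hσρ : ∀ γ : Γ, σ (γ : L) = (ρ γ).map (algebraMap (𝓞 K) K)} {y : L} :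
    y ∈ idealOf ρ σ j0 hσρ ↔ ∀ i, colMap σ j0 y i ∈ Pr K := Iff.rfl

lemma one_mem_idealOf (σ : L →ₐ[ℚ] Matrix (Fin n) (Fin n) K) (j0 : Fin n)
    (hσρ : ∀ γ : Γ, σ (γ : L) = (ρ γ).map (algebraMap (𝓞 K) K)) :
    (1 : L) ∈ idealOf ρ σ j0 hσρ := by
  intro i
  show σ 1 i j0 ∈ Pr K
  rw [_root_.map_one]
  rw [Matrix.one_apply]
  split
  · exact one_mem _
  · exact zero_mem _

lemma idealOf_ne_bot (σ : L →ₐ[ℚ] Matrix (Fin n) (Fin n) K) (j0 : Fin n)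
    (hσρ : ∀ γ : Γ, σ (γ : L) = (ρ γ).map (algebraMap (𝓞 K) K)) :
    idealOf ρ σ j0 hσρ ≠ ⊥ := by
  intro h
  have h1 := one_mem_idealOf ρ σ j0 hσρ
  rw [h, Submodule.mem_bot] at h1
  exact one_ne_zero h1

lemma idealOf_fg (σ : L →ₐ[ℚ] Matrix (Fin n) (Fin n) K) (j0 : Fin n)
    (hσρ : ∀ γ : Γ, σ (γ : L) = (ρ γ).map (algebraMap (𝓞 K) K)) :
    (idealOf ρ σ j0 hσρ).FG := by
  classical
  set F : L →ₗ[ℤ] (Fin n → K) := (colMap σ j0).toAddMonoidHom.toIntLinearMap with hF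
  have hFinj : Function.Injective F := colMap_injective σ j0
  set N : Submodule ℤ L := Submodule.restrictScalars ℤ (idealOf ρ σ j0 hσρ) with hN
  have hle : N.map F ≤ Lam K n := by
    rintro w ⟨y, hy, rfl⟩
    exact hy
  have hfg : (N.map F).FG := by
    haveI : IsNoetherian ℤ (Lam K n) := isNoetherian_of_fg_of_noetherian _ lam_fg
    have h1 : (Submodule.comap (Lam K n).subtype (N.map F)).FG :=
      IsNoetherian.noetherian _
    have h2 := h1.map (Lam K n).subtype
    rwa [Submodule.map_comap_subtype, inf_eq_right.mpr hle] at h2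
  have hNfg : N.FG := Submodule.fg_of_fg_map_injective F hFinj hfg
  obtain ⟨s, hs⟩ := hNfg
  refine ⟨s, le_antisymm (Submodule.span_le.mpr ?_) ?_⟩
  · intro y hy
    have : y ∈ N := hs ▸ Submodule.subset_span hy
    exact this
  · intro y hy
    have h1 : y ∈ Submodule.span ℤ (s : Set L) := by rw [hs]; exact hy
    have h2 : Submodule.span ℤ (s : Set L) ≤
        Submodule.restrictScalars ℤ (Submodule.span Γ (s : Set L)) :=
      Submodule.span_le.mpr Submodule.subset_span
    exact h2 h1


variable (ρ' : Γ →+* Matrix (Fin n) (Fin n) (𝓞 K))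

lemma frac_of_conj (hΓspan : Submodule.span ℚ (Γ : Set L) = ⊤)
    (σ σ' : L →ₐ[ℚ] Matrix (Fin n) (Fin n) K) (j0 : Fin n)
    (hσρ : ∀ γ : Γ, σ (γ : L) = (ρ γ).map (algebraMap (𝓞 K) K))
    (hσρ' : ∀ γ : Γ, σ' (γ : L) = (ρ' γ).map (algebraMap (𝓞 K) K))
    (hbij : Function.Bijective (colMap σ j0))
    (u : (Matrix (Fin n) (Fin n) (𝓞 K))ˣ)
    (hconj : ∀ γ : Γ, ρ' γ = (↑u : Matrix (Fin n) (Fin n) (𝓞 K)) * ρ γ *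
        (↑u⁻¹ : Matrix (Fin n) (Fin n) (𝓞 K))) :
    ∃ x : L, x ≠ 0 ∧ ∀ y : L,
      y ∈ idealOf ρ' σ' j0 hσρ' ↔ ∃ z ∈ idealOf ρ σ j0 hσρ, y = x * z := by
  classical
  set eα := LinearEquiv.ofBijective (colMap σ j0) hbij with heα
  set UA : Matrix (Fin n) (Fin n) K := (↑u : Matrix (Fin n) (Fin n) (𝓞 K)).map
    (algebraMap (𝓞 K) K) with hUA
  set UB : Matrix (Fin n) (Fin n) K := (↑u⁻¹ : Matrix (Fin n) (Fin n) (𝓞 K)).map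
    (algebraMap (𝓞 K) K) with hUB
  have hUAB : UA * UB = 1 := by
    rw [hUA, hUB, ← Matrix.map_mul, u.mul_inv]
    exact Matrix.map_one _ (map_zero _) (_root_.map_one _)
  have hUBA : UB * UA = 1 := by
    rw [hUA, hUB, ← Matrix.map_mul, u.inv_mul]
    exact Matrix.map_one _ (map_zero _) (_root_.map_one _)
  -- σ' is the conjugate of σ everywhere
  have hσ'_eq : ∀ y : L, σ' y = UA * σ y * UB := by
    set m : L →ₗ[ℚ] Matrix (Fin n) (Fin n) K :=
      { toFun := fun y => UA * σ y * UB
        map_add' := by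
          intro a b
          show UA * σ (a + b) * UB = UA * σ a * UB + UA * σ b * UB
          rw [map_add, mul_add, add_mul]
        map_smul' := by
          intro q a
          show UA * σ (q • a) * UB = q • (UA * σ a * UB)
          rw [show σ (q • a) = q • σ a from σ.toLinearMap.map_smul q a,
            mul_smul_comm, smul_mul_assoc] } with hm
    have heq : σ'.toLinearMap = m := by
      apply LinearMap.ext_on hΓspan
      intro y hy
      lift y to Γ using hy
      show σ' (y : L) = UA * σ (y : L) * UB
      rw [hσρ', hσρ, hconj y, Matrix.map_mul, Matrix.map_mul]
    intro y
    exact LinearMap.congr_fun heq y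
  -- the element x : the preimage of column j0 of UB
  set wB : Fin n → K := fun i => UB i j0 with hwB
  set x : L := eα.symm wB with hx
  have hαx : colMap σ j0 x = wB := eα.apply_symm_apply wB
  have hwB_single : UB *ᵥ Pi.single j0 1 = wB := by
    funext i
    simp [hwB]
  have hxne : x ≠ 0 := by
    intro h0
    have hw0 : wB = 0 := by rw [← hαx, h0, map_zero]
    have h1 : (UA * UB) *ᵥ Pi.single j0 (1 : K) = Pi.single j0 1 := by
      rw [hUAB, Matrix.one_mulVec]
    rw [← Matrix.mulVec_mulVec, hwB_single, hw0, Matrix.mulVec_zero] at h1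
    have h3 := congrFun h1 j0
    simp at h3
  have hUAint : ∀ i j, UA i j ∈ Pr K := fun i j => ⟨(↑u : Matrix _ _ (𝓞 K)) i j, rfl⟩
  have hUBint : ∀ i j, UB i j ∈ Pr K := fun i j => ⟨(↑u⁻¹ : Matrix _ _ (𝓞 K)) i j, rfl⟩
  -- the main membership computation
  have hmain : ∀ y : L, y ∈ idealOf ρ' σ' j0 hσρ' ↔ y * x ∈ idealOf ρ σ j0 hσρ := by
    intro y
    have hcol : colMap σ' j0 y = UA *ᵥ colMap σ j0 (y * x) := by
      rw [← colMap_single σ' j0 y, hσ'_eq y, ← Matrix.mulVec_mulVec,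
        ← Matrix.mulVec_mulVec, hwB_single, ← hαx, ← colMap_mul]
    constructor
    · intro hy
      have hy' : ∀ i, colMap σ' j0 y i ∈ Pr K := hy
      have hUAc : ∀ i, (UA *ᵥ colMap σ j0 (y * x)) i ∈ Pr K := by
        intro i
        have := hy' i
        rwa [hcol] at this
      have hcc : colMap σ j0 (y * x) = UB *ᵥ (UA *ᵥ colMap σ j0 (y * x)) := by
        rw [Matrix.mulVec_mulVec, hUBA, Matrix.one_mulVec]
      intro i
      show colMap σ j0 (y * x) i ∈ Pr K
      rw [hcc]
      exact mulVec_mem_lam hUBint hUAc i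
    · intro hy
      have hy' : ∀ i, colMap σ j0 (y * x) i ∈ Pr K := hy
      intro i
      show colMap σ' j0 y i ∈ Pr K
      rw [hcol]
      exact mulVec_mem_lam hUAint hy' i
  refine ⟨x⁻¹, inv_ne_zero hxne, fun y => ?_⟩
  constructor
  · intro hy
    refine ⟨y * x, (hmain y).mp hy, ?_⟩
    field_simp
  · rintro ⟨z, hz, rfl⟩
    apply (hmain _).mpr
    have hxx : x⁻¹ * z * x = z := by field_simp
    rw [hxx]
    exact hz


lemma conj_of_frac (σ σ' : L →ₐ[ℚ] Matrix (Fin n) (Fin n) K) (j0 : Fin n)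
    (hσρ : ∀ γ : Γ, σ (γ : L) = (ρ γ).map (algebraMap (𝓞 K) K))
    (hσρ' : ∀ γ : Γ, σ' (γ : L) = (ρ' γ).map (algebraMap (𝓞 K) K))
    (hσφ : ∀ k : K, σ (φ k) = Matrix.scalar (Fin n) k)
    (hσφ' : ∀ k : K, σ' (φ k) = Matrix.scalar (Fin n) k)
    (hb : Function.Bijective (colMap σ j0))
    (hb' : Function.Bijective (colMap σ' j0))
    (x : L) (hx : x ≠ 0)
    (hI : ∀ y : L, y ∈ idealOf ρ' σ' j0 hσρ' ↔ ∃ z ∈ idealOf ρ σ j0 hσρ, y = x * z) :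
    ConjRel Γ (Matrix (Fin n) (Fin n) (𝓞 K)) ρ ρ' := by
  classical
  set eα := LinearEquiv.ofBijective (colMap σ j0) hb with heα
  set eα' := LinearEquiv.ofBijective (colMap σ' j0) hb' with heα'
  have hsymm : ∀ (k : K) (w : Fin n → K), eα.symm (k • w) = φ k * eα.symm w := by
    intro k w
    have h1 : colMap σ j0 (eα.symm (k • w)) = k • w := eα.apply_symm_apply _
    have h2 : colMap σ j0 (φ k * eα.symm w) = k • w := by
      rw [colMap_smulK σ j0 hσφ, show colMap σ j0 (eα.symm w) = w from
        eα.apply_symm_apply w]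
    exact colMap_injective σ j0 (h1.trans h2.symm)
  have hsymm' : ∀ (k : K) (w : Fin n → K), eα'.symm (k • w) = φ k * eα'.symm w := by
    intro k w
    have h1 : colMap σ' j0 (eα'.symm (k • w)) = k • w := eα'.apply_symm_apply _
    have h2 : colMap σ' j0 (φ k * eα'.symm w) = k • w := by
      rw [colMap_smulK σ' j0 hσφ', show colMap σ' j0 (eα'.symm w) = w from
        eα'.apply_symm_apply w]
    exact colMap_injective σ' j0 (h1.trans h2.symm)
  set t : (Fin n → K) →ₗ[K] (Fin n → K) :=
    { toFun := fun w => colMap σ' j0 (x * eα.symm w)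
      map_add' := by
        intro a b
        show colMap σ' j0 (x * eα.symm (a + b)) = _
        rw [map_add, mul_add, map_add]
      map_smul' := by
        intro k w
        show colMap σ' j0 (x * eα.symm (k • w)) = k • colMap σ' j0 (x * eα.symm w)
        rw [hsymm, mul_left_comm, colMap_smulK σ' j0 hσφ'] } with ht
  set t' : (Fin n → K) →ₗ[K] (Fin n → K) :=
    { toFun := fun w => colMap σ j0 (x⁻¹ * eα'.symm w)
      map_add' := by
        intro a b
        show colMap σ j0 (x⁻¹ * eα'.symm (a + b)) = _
        rw [map_add, mul_add, map_add]
      map_smul' := by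
        intro k w
        show colMap σ j0 (x⁻¹ * eα'.symm (k • w)) = k • colMap σ j0 (x⁻¹ * eα'.symm w)
        rw [hsymm', mul_left_comm, colMap_smulK σ j0 hσφ] } with ht'
  have htt' : ∀ w, t (t' w) = w := by
    intro w
    show colMap σ' j0 (x * eα.symm (colMap σ j0 (x⁻¹ * eα'.symm w))) = w
    rw [show ∀ z : L, colMap σ j0 z = eα z from fun _ => rfl, eα.symm_apply_apply,
      mul_inv_cancel_left₀ hx]
    exact eα'.apply_symm_apply w
  have ht't : ∀ w, t' (t w) = w := by
    intro w
    show colMap σ j0 (x⁻¹ * eα'.symm (colMap σ' j0 (x * eα.symm w))) = w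
    rw [show ∀ z : L, colMap σ' j0 z = eα' z from fun _ => rfl, eα'.symm_apply_apply,
      inv_mul_cancel_left₀ hx]
    exact eα.apply_symm_apply w
  set U := LinearMap.toMatrix' t with hUdef
  set U' := LinearMap.toMatrix' t' with hU'def
  have hU : ∀ w, U *ᵥ w = t w := by
    intro w
    rw [← Matrix.toLin'_apply, hUdef, Matrix.toLin'_toMatrix']
  have hU' : ∀ w, U' *ᵥ w = t' w := by
    intro w
    rw [← Matrix.toLin'_apply, hU'def, Matrix.toLin'_toMatrix']
  have hUU' : U * U' = 1 := by
    rw [hUdef, hU'def, ← LinearMap.toMatrix'_comp, show t.comp t' = LinearMap.id from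
      LinearMap.ext htt', LinearMap.toMatrix'_id]
  have hU'U : U' * U = 1 := by
    rw [hUdef, hU'def, ← LinearMap.toMatrix'_comp, show t'.comp t = LinearMap.id from
      LinearMap.ext ht't, LinearMap.toMatrix'_id]
  -- integrality of the entries of U and U'
  have hsingle_mem : ∀ (j i : Fin n), (Pi.single j 1 : Fin n → K) i ∈ Pr K := by
    intro j i
    rw [Pi.single_apply]
    split
    · exact one_mem _
    · exact zero_mem _
  have hUij : ∀ i j, U i j = t (Pi.single j 1) i := by
    intro i j
    have h1 := congrFun (hU (Pi.single j 1)) i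
    rw [Matrix.mulVec_single] at h1
    simpa using h1
  have hU'ij : ∀ i j, U' i j = t' (Pi.single j 1) i := by
    intro i j
    have h1 := congrFun (hU' (Pi.single j 1)) i
    rw [Matrix.mulVec_single] at h1
    simpa using h1
  have hUint : ∀ i j, U i j ∈ Pr K := by
    intro i j
    rw [hUij]
    set z := eα.symm (Pi.single j (1:K)) with hz
    have hzI : z ∈ idealOf ρ σ j0 hσρ := by
      intro i'
      show colMap σ j0 z i' ∈ Pr K
      rw [show colMap σ j0 z = Pi.single j 1 from eα.apply_symm_apply _]
      exact hsingle_mem j i'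
    have hxzI : x * z ∈ idealOf ρ' σ' j0 hσρ' := (hI _).mpr ⟨z, hzI, rfl⟩
    exact hxzI i
  have hU'int : ∀ i j, U' i j ∈ Pr K := by
    intro i j
    rw [hU'ij]
    set z' := eα'.symm (Pi.single j (1:K)) with hz'
    have hz'I : z' ∈ idealOf ρ' σ' j0 hσρ' := by
      intro i'
      show colMap σ' j0 z' i' ∈ Pr K
      rw [show colMap σ' j0 z' = Pi.single j 1 from eα'.apply_symm_apply _]
      exact hsingle_mem j i'
    obtain ⟨z, hzI, hzz⟩ := (hI z').mp hz'I
    have : x⁻¹ * z' = z := by rw [hzz, inv_mul_cancel_left₀ hx]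
    show colMap σ j0 (x⁻¹ * z') i ∈ Pr K
    rw [this]
    exact hzI i
  -- lift to matrices over the ring of integers
  set A : Matrix (Fin n) (Fin n) (𝓞 K) := Matrix.of fun i j => (hUint i j).choose with hA
  set B : Matrix (Fin n) (Fin n) (𝓞 K) := Matrix.of fun i j => (hU'int i j).choose with hB
  have hAmap : A.map (algebraMap (𝓞 K) K) = U := by
    ext i j
    exact (hUint i j).choose_spec
  have hBmap : B.map (algebraMap (𝓞 K) K) = U' := by
    ext i j
    exact (hU'int i j).choose_spec
  have hmapinj : Function.Injective
      (fun M : Matrix (Fin n) (Fin n) (𝓞 K) => M.map (algebraMap (𝓞 K) K)) :=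
    Matrix.map_injective RingOfIntegers.coe_injective
  have hAB : A * B = 1 := by
    apply hmapinj
    show (A * B).map _ = (1 : Matrix (Fin n) (Fin n) (𝓞 K)).map _
    rw [Matrix.map_mul, hAmap, hBmap, hUU',
      Matrix.map_one _ (map_zero _) (_root_.map_one _)]
  have hBA : B * A = 1 := by
    apply hmapinj
    show (B * A).map _ = (1 : Matrix (Fin n) (Fin n) (𝓞 K)).map _
    rw [Matrix.map_mul, hBmap, hAmap, hU'U,
      Matrix.map_one _ (map_zero _) (_root_.map_one _)]
  -- the conjugation identity over K
  have key : ∀ (γ : Γ) (w : Fin n → K),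
      (σ' (γ : L)) *ᵥ (U *ᵥ w) = U *ᵥ ((σ (γ : L)) *ᵥ w) := by
    intro γ w
    have h1 : U *ᵥ w = colMap σ' j0 (x * eα.symm w) := hU w
    have h2 : (σ (γ : L)) *ᵥ w = colMap σ j0 ((γ : L) * eα.symm w) := by
      conv_lhs => rw [show w = colMap σ j0 (eα.symm w) from (eα.apply_symm_apply w).symm]
      rw [← colMap_mul]
    rw [h1, h2, ← colMap_mul, hU]
    show colMap σ' j0 ((γ : L) * (x * eα.symm w)) =
      colMap σ' j0 (x * eα.symm (colMap σ j0 ((γ : L) * eα.symm w)))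
    rw [show ∀ z : L, colMap σ j0 z = eα z from fun _ => rfl, eα.symm_apply_apply,
      mul_left_comm]
  have hmat : ∀ γ : Γ, (σ' (γ : L)) * U = U * (σ (γ : L)) := by
    intro γ
    ext i j
    have h1 := congrFun (key γ (Pi.single j 1)) i
    rw [Matrix.mulVec_mulVec, Matrix.mulVec_mulVec] at h1
    rw [Matrix.mulVec_single] at h1
    simpa using h1
  have hconjmat : ∀ γ : Γ, ρ' γ * A = A * ρ γ := by
    intro γ
    apply hmapinj
    show (ρ' γ * A).map _ = (A * ρ γ).map _
    rw [Matrix.map_mul, Matrix.map_mul, hAmap, ← hσρ, ← hσρ', hmat]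
  refine ⟨⟨A, B, hAB, hBA⟩, fun γ => ?_⟩
  show ρ' γ = A * ρ γ * B
  calc ρ' γ = ρ' γ * (A * B) := by rw [hAB, mul_one]
    _ = (ρ' γ * A) * B := by rw [mul_assoc]
    _ = (A * ρ γ) * B := by rw [hconjmat]
    _ = A * ρ γ * B := rfl

end CompatAux

lemma fracIdealRel_equivalence (L : Type*) [Field L] (Γ : Subring L) :
    Equivalence (FracIdealRel L Γ) := by
  constructor
  · intro I
    exact ⟨1, one_ne_zero, fun y => ⟨fun hy => ⟨y, hy, (one_mul y).symm⟩,
      by rintro ⟨z, hz, rfl⟩; rwa [one_mul]⟩⟩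
  · rintro I I' ⟨x, hx, h⟩
    refine ⟨x⁻¹, inv_ne_zero hx, fun y => ?_⟩
    constructor
    · intro hy
      refine ⟨x * y, (h (x * y)).mpr ⟨y, hy, rfl⟩, ?_⟩
      rw [inv_mul_cancel_left₀ hx]
    · rintro ⟨z, hz, rfl⟩
      obtain ⟨w, hw, hzw⟩ := (h z).mp hz
      rw [hzw, inv_mul_cancel_left₀ hx]
      exact hw
  · rintro I1 I2 I3 ⟨x, hx, h⟩ ⟨x', hx', h'⟩
    refine ⟨x' * x, mul_ne_zero hx' hx, fun y => ?_⟩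
    constructor
    · intro hy
      obtain ⟨z2, hz2, rfl⟩ := (h' y).mp hy
      obtain ⟨z1, hz1, rfl⟩ := (h z2).mp hz2
      exact ⟨z1, hz1, (mul_assoc _ _ _).symm⟩
    · rintro ⟨z1, hz1, rfl⟩
      exact (h' _).mpr ⟨x * z1, (h _).mpr ⟨z1, hz1, rfl⟩, mul_assoc _ _ _⟩

/-- Let `L` be a number field, `Γ` an order of `L`, `K ⊆ L` a subfield
with ring of integers `O_K`, `n = [L:K]`, `R = Mₙ(O_K)`, and fix a ring homomorphism
`φ : K → L`.  Then there is an injective map from the set of `φ`-compatible ring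
homomorphisms `Γ → R` modulo conjugation by units of `R` into the set `C_Γ` of
equivalence classes of fractional ideals of `Γ`. -/
theorem compatible_gammaStructures_inject_into_idealClasses
    (L K : Type*) [Field L] [NumberField L] [Field K] [NumberField K] [Algebra K L]
    (Γ : Subring L) (hΓfin : Module.Finite ℤ Γ)
    (hΓspan : Submodule.span ℚ (Γ : Set L) = ⊤)
    (n : ℕ) (hn : n = Module.finrank K L) (φ : K →+* L) :
    ∃ f : Quot (fun ρ ρ' : {ρ : Γ →+* Matrix (Fin n) (Fin n) (𝓞 K) //
          IsCompatible L K n Γ φ ρ} => ConjRel Γ (Matrix (Fin n) (Fin n) (𝓞 K)) ρ.1 ρ'.1) →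
        Quot (FracIdealRel L Γ),
      Function.Injective f := by
  classical
  haveI : FiniteDimensional K L := FiniteDimensional.right ℚ K L
  have hn0 : 0 < n := by rw [hn]; exact Module.finrank_pos
  set j0 : Fin n := ⟨0, hn0⟩ with hj0
  have hcard : Module.finrank ℚ L = Module.finrank ℚ (Fin n → K) := by
    rw [Module.finrank_pi_fintype ℚ, Finset.sum_const, Finset.card_univ,
      Fintype.card_fin, smul_eq_mul, ← Module.finrank_mul_finrank ℚ K L, hn, mul_comm]
  set T := {ρ : Γ →+* Matrix (Fin n) (Fin n) (𝓞 K) // IsCompatible L K n Γ φ ρ} with hT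
  let σ0 : T → (L →ₐ[ℚ] Matrix (Fin n) (Fin n) K) := fun r => r.2.choose
  have hspec1 : ∀ r : T, ∀ γ : Γ, (σ0 r) (γ : L) = (r.1 γ).map (algebraMap (𝓞 K) K) :=
    fun r => r.2.choose_spec.1
  have hspec2 : ∀ r : T, ∀ k : K, (σ0 r) (φ k) = Matrix.scalar (Fin n) k :=
    fun r => r.2.choose_spec.2
  let g : T → FractionalIdealOf L Γ := fun r =>
    ⟨CompatAux.idealOf r.1 (σ0 r) j0 (hspec1 r),
      CompatAux.idealOf_ne_bot r.1 (σ0 r) j0 (hspec1 r),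
      CompatAux.idealOf_fg r.1 (σ0 r) j0 (hspec1 r)⟩
  have hsound : ∀ r r' : T, ConjRel Γ (Matrix (Fin n) (Fin n) (𝓞 K)) r.1 r'.1 →
      Quot.mk (FracIdealRel L Γ) (g r) = Quot.mk (FracIdealRel L Γ) (g r') := by
    rintro r r' ⟨u, hu⟩
    apply Quot.sound
    exact CompatAux.frac_of_conj r.1 r'.1 hΓspan (σ0 r) (σ0 r') j0 (hspec1 r) (hspec1 r')
      (CompatAux.colMap_bijective (σ0 r) j0 hcard) u hu
  refine ⟨Quot.lift (fun r => Quot.mk (FracIdealRel L Γ) (g r)) hsound, ?_⟩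
  intro a b hab
  obtain ⟨r, rfl⟩ := Quot.exists_rep a
  obtain ⟨r', rfl⟩ := Quot.exists_rep b
  apply Quot.sound
  have h3 : Quot.mk (FracIdealRel L Γ) (g r) = Quot.mk (FracIdealRel L Γ) (g r') := hab
  have h2 : FracIdealRel L Γ (g r) (g r') :=
    (fracIdealRel_equivalence L Γ).eqvGen_iff.mp (Quot.eq.mp h3)
  obtain ⟨x, hxne, hiff⟩ := h2
  exact CompatAux.conj_of_frac r.1 r'.1 (σ0 r) (σ0 r') j0 (hspec1 r) (hspec1 r')
    (hspec2 r) (hspec2 r') (CompatAux.colMap_bijective (σ0 r) j0 hcard)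
    (CompatAux.colMap_bijective (σ0 r') j0 hcard) x hxne hiff
end

section
/- Let Ω be an associative unital ℚ-algebra, let R and R' be subrings of Ω with R' ⊆ R, let d ≥ 1 be an integer with d·R ⊆ R', let Γ be an order of a number field L, and let Γ' = ℤ[dΓ]. Then the number of Γ-structures on R is at most the number of Γ'-structures on R' (as an inequality of cardinalities). -/
theorem conjRel_equivalence (A B : Type*) [Ring A] [Ring B] : Equivalence (ConjRel A B) := by
  constructor
  · intro ρ; exact ⟨1, fun a => by simp⟩
  · rintro ρ ρ' ⟨u, hu⟩
    refine ⟨u⁻¹, fun a => ?_⟩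
    rw [hu a]
    simp [mul_assoc]
  · rintro ρ₁ ρ₂ ρ₃ ⟨u, hu⟩ ⟨v, hv⟩
    refine ⟨v * u, fun a => ?_⟩
    rw [hv a, hu a]
    simp [mul_assoc]


/-- Let `Ω` be an associative unital `ℚ`-algebra, `R` and `R'` subrings
of `Ω` with `R' ⊆ R`, `d ≥ 1` an integer with `d·R ⊆ R'`, `Γ` an order of a number field
`L`, and `Γ' = ℤ[dΓ]`.  Then the number of `Γ`-structures on `R` is at most the number
of `Γ'`-structures on `R'` (as an inequality of cardinalities). -/
theorem card_gammaStructures_le_of_subring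
    (Ω : Type*) [Ring Ω] [Algebra ℚ Ω] (R R' : Subring Ω) (hsub : R' ≤ R)
    (L : Type*) [Field L] [NumberField L]
    (Γ : Subring L) (hΓfin : Module.Finite ℤ Γ)
    (hΓspan : Submodule.span ℚ (Γ : Set L) = ⊤)
    (d : ℕ) (hd : 1 ≤ d) (hdR : ∀ x ∈ R, (d : Ω) * x ∈ R')
    (Γ' : Subring L) (hΓ' : Γ' = Subring.closure ((fun γ : L => (d : L) * γ) '' (Γ : Set L))) :
    Cardinal.mk (Quot (ConjRel Γ R)) ≤ Cardinal.mk (Quot (ConjRel Γ' R')) := by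
  classical
  -- Γ' ≤ Γ
  have hle : Γ' ≤ Γ := by
    rw [hΓ']
    refine Subring.closure_le.mpr ?_
    rintro _ ⟨γ, hγ, rfl⟩
    exact Γ.mul_mem (natCast_mem Γ d) hγ
  -- restriction lands in R'
  have hmem : ∀ (ρ : Γ →+* R) (x : L) (h : x ∈ Γ'), ((ρ ⟨x, hle h⟩ : R) : Ω) ∈ R' := by
    intro ρ
    let K : Subring L :=
      { carrier := {x : L | ∃ h : x ∈ Γ, ((ρ ⟨x, h⟩ : R) : Ω) ∈ R'}
        one_mem' := ⟨Γ.one_mem, by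
          have : (⟨(1 : L), Γ.one_mem⟩ : Γ) = 1 := rfl
          rw [this, map_one]; exact R'.one_mem⟩
        zero_mem' := ⟨Γ.zero_mem, by
          have : (⟨(0 : L), Γ.zero_mem⟩ : Γ) = 0 := rfl
          rw [this, map_zero]; exact R'.zero_mem⟩
        add_mem' := by
          rintro a b ⟨ha, ha'⟩ ⟨hb, hb'⟩
          refine ⟨Γ.add_mem ha hb, ?_⟩
          have : (⟨a + b, Γ.add_mem ha hb⟩ : Γ) = ⟨a, ha⟩ + ⟨b, hb⟩ := rfl
          rw [this, map_add]
          exact R'.add_mem ha' hb'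
        mul_mem' := by
          rintro a b ⟨ha, ha'⟩ ⟨hb, hb'⟩
          refine ⟨Γ.mul_mem ha hb, ?_⟩
          have : (⟨a * b, Γ.mul_mem ha hb⟩ : Γ) = ⟨a, ha⟩ * ⟨b, hb⟩ := rfl
          rw [this, map_mul]
          exact R'.mul_mem ha' hb'
        neg_mem' := by
          rintro a ⟨ha, ha'⟩
          refine ⟨Γ.neg_mem ha, ?_⟩
          have : (⟨-a, Γ.neg_mem ha⟩ : Γ) = -⟨a, ha⟩ := rfl
          rw [this, map_neg]
          exact R'.neg_mem ha' }
    have hK : Γ' ≤ K := by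
      rw [hΓ']
      refine Subring.closure_le.mpr ?_
      rintro _ ⟨γ, hγ, rfl⟩
      refine ⟨Γ.mul_mem (natCast_mem Γ d) hγ, ?_⟩
      have h1 : (⟨(d : L) * γ, Γ.mul_mem (natCast_mem Γ d) hγ⟩ : Γ) = (d : Γ) * ⟨γ, hγ⟩ := by
        ext; simp
      rw [h1, map_mul, map_natCast]
      push_cast
      exact hdR _ (ρ ⟨γ, hγ⟩).2
    intro x h
    obtain ⟨h1, h2⟩ := hK h
    exact h2
  -- the restriction map
  let F : (Γ →+* R) → (Γ' →+* R') := fun ρ =>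
    { toFun := fun x => ⟨((ρ ⟨x.1, hle x.2⟩ : R) : Ω), hmem ρ x.1 x.2⟩
      map_one' := by
        ext
        have : (⟨((1 : Γ') : L), hle Γ'.one_mem⟩ : Γ) = 1 := by ext; simp
        simp only [this, map_one]; rfl
      map_mul' := by
        intro x y
        ext
        have : (⟨((x * y : Γ') : L), hle (x * y).2⟩ : Γ)
            = ⟨x.1, hle x.2⟩ * ⟨y.1, hle y.2⟩ := rfl
        simp only [this, map_mul]; rfl
      map_zero' := by
        ext
        have : (⟨((0 : Γ') : L), hle Γ'.zero_mem⟩ : Γ) = 0 := by ext; simp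
        simp only [this, map_zero]; rfl
      map_add' := by
        intro x y
        ext
        have : (⟨((x + y : Γ') : L), hle (x + y).2⟩ : Γ)
            = ⟨x.1, hle x.2⟩ + ⟨y.1, hle y.2⟩ := rfl
        simp only [this, map_add]; rfl }
  -- d is invertible in Ω
  have hdu : IsUnit ((d : ℚ) • (1 : Ω)) := by
    have h0 : (d : ℚ) ≠ 0 := by positivity
    have := (isUnit_iff_ne_zero.mpr h0).map (algebraMap ℚ Ω)
    rwa [Algebra.algebraMap_eq_smul_one] at this
  have hdΩ : IsUnit ((d : Ω)) := by
    have : ((d : ℚ) • (1 : Ω)) = (d : Ω) := by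
      rw [← Algebra.algebraMap_eq_smul_one, map_natCast]
    rwa [this] at hdu
  -- key injectivity step
  have key : ∀ ρ ρ' : Γ →+* R, ConjRel Γ' R' (F ρ) (F ρ') → ConjRel Γ R ρ ρ' := by
    rintro ρ ρ' ⟨u, hu⟩
    refine ⟨Units.map (Subring.inclusion hsub).toMonoidHom u, fun γ => ?_⟩
    have hdγ : (d : L) * (γ : L) ∈ Γ' := by
      rw [hΓ']
      exact Subring.subset_closure ⟨γ, γ.2, rfl⟩
    have h := hu ⟨(d : L) * γ, hdγ⟩
    -- coerce to Ω
    have hΩ : ((ρ' ⟨(d : L) * γ, hle hdγ⟩ : R) : Ω)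
        = (u : R') * ((ρ ⟨(d : L) * γ, hle hdγ⟩ : R) : Ω) * ((u⁻¹ : R'ˣ) : R') := by
      have := congrArg (fun z : R' => (z : Ω)) h
      simpa [F] using this
    have hdg : (⟨(d : L) * γ, hle hdγ⟩ : Γ) = (d : Γ) * γ := by ext; simp
    rw [hdg, map_mul, map_natCast, map_mul, map_natCast] at hΩ
    push_cast at hΩ
    -- now hΩ : (d:Ω) * ρ' γ = u * ((d:Ω) * ρ γ) * u⁻¹
    have hcomm : ((u : R') : Ω) * ((d : Ω) * ((ρ γ : R) : Ω)) * (((u⁻¹ : R'ˣ) : R') : Ω)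
        = (d : Ω) * (((u : R') : Ω) * ((ρ γ : R) : Ω) * (((u⁻¹ : R'ˣ) : R') : Ω)) := by
      rw [← mul_assoc, ← (Nat.cast_commute d (((u : R') : Ω))).eq, mul_assoc, mul_assoc,
        ← mul_assoc (((u : R') : Ω))]
    rw [hcomm] at hΩ
    have hΩ' := hdΩ.mul_left_cancel hΩ
    ext
    simpa using hΩ'
  -- conclude
  have hequiv' := conjRel_equivalence Γ' R'
  have hinj : Function.Injective
      (fun c : Quot (ConjRel Γ R) => Quot.mk (ConjRel Γ' R') (F (Quot.out c))) := by
    intro c c' h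
    have h2 : ConjRel Γ' R' (F (Quot.out c)) (F (Quot.out c')) :=
      hequiv'.eqvGen_iff.mp (Quot.eqvGen_exact h)
    have h3 := key _ _ h2
    calc c = Quot.mk _ (Quot.out c) := (Quot.out_eq c).symm
      _ = Quot.mk _ (Quot.out c') := Quot.sound h3
      _ = c' := Quot.out_eq c'
  exact Cardinal.mk_le_of_injective hinj
end

section
/- Let Ω be an associative unital ℚ-algebra, let R and R' be subrings of Ω with R' ⊆ R, and let d ≥ 1 be an integer with d·R ⊆ R'. Then every unit of R' is a unit of R, R'^× is a subgroup of R^×, and the number of cosets of R'^× in R^× is at most the cardinality of the additive quotient group R/dR. -/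
/-- The subgroup `{u ∈ R^× : u ∈ R' and u⁻¹ ∈ R'}` of the unit group `R^×` of a subring
`R` of `Ω`, identified with the unit group of the smaller subring `R'`. -/
def unitsOfSubring (Ω : Type*) [Ring Ω] (R' R : Subring Ω) : Subgroup (↥R)ˣ where
  carrier := {u | ((u : ↥R) : Ω) ∈ R' ∧ (((u⁻¹ : (↥R)ˣ) : ↥R) : Ω) ∈ R'}
  one_mem' := ⟨by simpa using R'.one_mem, by simpa using R'.one_mem⟩
  mul_mem' := by
    intro a b ha hb
    refine ⟨?_, ?_⟩
    · simpa using R'.mul_mem ha.1 hb.1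
    · simpa [mul_inv_rev] using R'.mul_mem hb.2 ha.2
  inv_mem' := by
    intro a ha
    exact ⟨ha.2, by simpa using ha.1⟩

/-- The additive subgroup `d·R` of (the subring) `R`. -/
def multiplesSubgroup (Ω : Type*) [Ring Ω] (R : Subring Ω) (d : ℕ) : AddSubgroup ↥R :=
  AddMonoidHom.range (d • AddMonoidHom.id ↥R)

/-- Let `Ω` be an associative unital `ℚ`-algebra, `R` and `R'` subrings
of `Ω` with `R' ⊆ R`, and `d ≥ 1` an integer with `d·R ⊆ R'`.  Then every unit of `R'`
is a unit of `R`; `R'^×` is (identified with) the subgroup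
`{u ∈ R^× : u ∈ R' and u⁻¹ ∈ R'}` of `R^×`; and the number of cosets of `R'^×` in `R^×`
is at most the cardinality of the additive quotient group `R/dR`. -/
theorem units_index_le_card_quotient
    (Ω : Type*) [Ring Ω] [Algebra ℚ Ω] (R R' : Subring Ω) (hsub : R' ≤ R)
    (d : ℕ) (hd : 1 ≤ d) (hdR : ∀ x ∈ R, (d : Ω) * x ∈ R') :
    (∀ u : (↥R')ˣ, IsUnit (Subring.inclusion hsub (u : ↥R'))) ∧
    Cardinal.mk ((↥R)ˣ ⧸ unitsOfSubring Ω R' R) ≤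
      Cardinal.mk (↥R ⧸ multiplesSubgroup Ω R d) := by

  constructor
  · intro u
    exact (Units.map (Subring.inclusion hsub).toMonoidHom u).isUnit
  · have key : ∀ u v : (↥R)ˣ,
        ((u : ↥R) : ↥R ⧸ multiplesSubgroup Ω R d) = ((v : ↥R) : ↥R ⧸ multiplesSubgroup Ω R d) →
        u⁻¹ * v ∈ unitsOfSubring Ω R' R := by
      intro u v h
      rw [QuotientAddGroup.eq_iff_sub_mem] at h
      obtain ⟨x, hx⟩ := h
      have hx' : (d : ↥R) * x = (u : ↥R) - (v : ↥R) := by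
        simpa [nsmul_eq_mul] using hx
      have hv : ((v : ↥R) : Ω) = ((u : ↥R) : Ω) - (d : Ω) * (x : Ω) := by
        have := congrArg (fun y : ↥R => (y : Ω)) hx'
        push_cast at this
        rw [this]
        abel
      constructor
      · -- ((u⁻¹ * v : Rˣ) : Ω) = 1 - d * (u⁻¹ * x)
        have e : ((((u⁻¹ * v : (↥R)ˣ) : ↥R)) : Ω)
            = 1 - (d : Ω) * ((((u⁻¹ : (↥R)ˣ) : ↥R) : Ω) * (x : Ω)) := by
          have huu : ((((u⁻¹ : (↥R)ˣ) : ↥R)) : Ω) * (((u : (↥R)ˣ) : ↥R) : Ω) = 1 := by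
            have := u.inv_mul
            have := congrArg (fun y : ↥R => (y : Ω)) this
            push_cast at this
            simpa using this
          push_cast
          rw [hv, mul_sub, huu, ← mul_assoc, ← (Nat.cast_commute d _).eq, mul_assoc]
        rw [e]
        have hmem : (d : Ω) * ((((u⁻¹ : (↥R)ˣ) : ↥R) : Ω) * (x : Ω)) ∈ R' := by
          apply hdR
          exact R.mul_mem ((u⁻¹ : (↥R)ˣ) : ↥R).2 x.2
        exact R'.sub_mem R'.one_mem hmem
      · -- inverse is v⁻¹ * u
        have e : (((((u⁻¹ * v : (↥R)ˣ))⁻¹ : (↥R)ˣ) : ↥R) : Ω)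
            = 1 + (d : Ω) * ((((v⁻¹ : (↥R)ˣ) : ↥R) : Ω) * (x : Ω)) := by
          have hvv : ((((v⁻¹ : (↥R)ˣ) : ↥R)) : Ω) * (((v : (↥R)ˣ) : ↥R) : Ω) = 1 := by
            have := v.inv_mul
            have := congrArg (fun y : ↥R => (y : Ω)) this
            push_cast at this
            simpa using this
          rw [mul_inv_rev, inv_inv]
          push_cast
          have hu : ((u : ↥R) : Ω) = ((v : ↥R) : Ω) + (d : Ω) * (x : Ω) := by
            rw [hv]; abel
          rw [hu, mul_add, hvv, ← mul_assoc, ← (Nat.cast_commute d _).eq, mul_assoc]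
        rw [e]
        have hmem : (d : Ω) * ((((v⁻¹ : (↥R)ˣ) : ↥R) : Ω) * (x : Ω)) ∈ R' := by
          apply hdR
          exact R.mul_mem ((v⁻¹ : (↥R)ˣ) : ↥R).2 x.2
        exact R'.add_mem R'.one_mem hmem
    apply Cardinal.mk_le_of_injective
      (f := fun a : (↥R)ˣ ⧸ unitsOfSubring Ω R' R =>
        (((a.out : (↥R)ˣ) : ↥R) : ↥R ⧸ multiplesSubgroup Ω R d))
    intro a b h
    have := key _ _ h
    have : (a.out : (↥R)ˣ ⧸ unitsOfSubring Ω R' R) = b.out := by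
      rw [QuotientGroup.eq]
      exact this
    rwa [QuotientGroup.out_eq', QuotientGroup.out_eq'] at this
end

section
/- Let L be a number field of degree g = [L:ℚ] with ring of integers O_L, let Γ be an order of L with conductor f, let d ≥ 1 be an integer, and let Γ' = ℤ[dΓ] with conductor f'. Then d·f ⊆ f'; in other words, for every x ∈ O_L with x·O_L ⊆ Γ one has (d·x)·O_L ⊆ Γ'. Consequently N(f') ≤ d^g · N(f), i.e. |O_L/f'| ≤ d^g · |O_L/f|. -/
open NumberField

/-- The conductor of a subring `Γ` of `L`: the ideal `{x ∈ O_L : x·O_L ⊆ Γ}` of the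
ring of integers `O_L` of `L`. -/
def orderConductor (L : Type*) [Field L] (Γ : Subring L) : Ideal (𝓞 L) where
  carrier := {x : 𝓞 L | ∀ y : 𝓞 L, algebraMap (𝓞 L) L (x * y) ∈ Γ}
  add_mem' := by
    intro a b ha hb y
    have : (a + b) * y = a * y + b * y := add_mul a b y
    rw [this, map_add]
    exact Γ.add_mem (ha y) (hb y)
  zero_mem' := by
    intro y
    rw [zero_mul, map_zero]
    exact Γ.zero_mem
  smul_mem' := by
    intro c x hx y
    have : c • x * y = x * (c * y) := by rw [smul_eq_mul]; ring
    rw [this]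
    exact hx (c * y)

theorem exists_int_mul_mem_subring {L : Type*} [Field L] [CharZero L] (Γ : Subring L)
    {z : L} (hz : z ∈ Submodule.span ℚ (Γ : Set L)) :
    ∃ n : ℤ, n ≠ 0 ∧ (n : L) * z ∈ Γ := by
  induction hz using Submodule.span_induction with
  | mem x hx => exact ⟨1, one_ne_zero, by simpa using hx⟩
  | zero => exact ⟨1, one_ne_zero, by simpa using Γ.zero_mem⟩
  | add x y _ _ hx hy =>
      obtain ⟨m, hm, hmx⟩ := hx
      obtain ⟨n, hn, hny⟩ := hy
      refine ⟨m * n, mul_ne_zero hm hn, ?_⟩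
      have h : ((m * n : ℤ) : L) * (x + y) = (n : L) * ((m : L) * x) + (m : L) * ((n : L) * y) := by
        push_cast; ring
      rw [h]
      exact Γ.add_mem (Γ.mul_mem (intCast_mem Γ n) hmx) (Γ.mul_mem (intCast_mem Γ m) hny)
  | smul q x _ hx =>
      obtain ⟨n, hn, hnx⟩ := hx
      refine ⟨(q.den : ℤ) * n, mul_ne_zero (mod_cast q.den_ne_zero) hn, ?_⟩
      have hq : ((q * (q.den : ℚ) : ℚ) : L) = ((q.num : ℚ) : L) := by
        rw [Rat.mul_den_eq_num]
      have h : (((q.den : ℤ) * n : ℤ) : L) * (q • x) = (q.num : L) * ((n : L) * x) := by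
        rw [Rat.smul_def]
        push_cast at hq ⊢
        rw [← hq]; ring
      rw [h]
      exact Γ.mul_mem (intCast_mem Γ q.num) hnx

theorem orderConductor_ne_bot (L : Type*) [Field L] [NumberField L]
    (Γ : Subring L) (hΓspan : Submodule.span ℚ (Γ : Set L) = ⊤) :
    orderConductor L Γ ≠ ⊥ := by
  classical
  obtain ⟨s, hs⟩ := (Module.finite_def.mp (inferInstance : Module.Finite ℤ (𝓞 L)))
  have H : ∀ b : 𝓞 L, ∃ n : ℤ, n ≠ 0 ∧ (n : L) * (algebraMap (𝓞 L) L b) ∈ Γ := fun b =>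
    exists_int_mul_mem_subring Γ (by rw [hΓspan]; trivial)
  choose n hn0 hnmem using H
  set N : ℤ := ∏ b ∈ s, n b with hN
  have hNne : N ≠ 0 := Finset.prod_ne_zero_iff.mpr fun b _ => hn0 b
  have key : ∀ y : 𝓞 L, (N : L) * algebraMap (𝓞 L) L y ∈ Γ := by
    intro y
    have hy : y ∈ Submodule.span ℤ (s : Set (𝓞 L)) := by rw [hs]; trivial
    induction hy using Submodule.span_induction with
    | mem b hb =>
        have hsplit : N = n b * ∏ c ∈ s.erase b, n c := (Finset.mul_prod_erase s n hb).symm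
        have h : (N : L) * algebraMap (𝓞 L) L b =
            ((∏ c ∈ s.erase b, n c : ℤ) : L) * ((n b : L) * algebraMap (𝓞 L) L b) := by
          rw [hsplit]; push_cast; ring
        rw [h]
        exact Γ.mul_mem (intCast_mem Γ _) (hnmem b)
    | zero => simpa using Γ.zero_mem
    | add x y _ _ hx hy =>
        rw [map_add, mul_add]
        exact Γ.add_mem hx hy
    | smul c x _ hx =>
        have h : (N : L) * algebraMap (𝓞 L) L (c • x) =
            (c : L) * ((N : L) * algebraMap (𝓞 L) L x) := by
          rw [zsmul_eq_mul, map_mul, map_intCast]; ring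
        rw [h]
        exact Γ.mul_mem (intCast_mem Γ c) hx
  intro hbot
  have hmem : (N : 𝓞 L) ∈ orderConductor L Γ := by
    intro y
    have : algebraMap (𝓞 L) L ((N : 𝓞 L) * y) = (N : L) * algebraMap (𝓞 L) L y := by
      rw [map_mul, map_intCast]
    rw [this]
    exact key y
  rw [hbot, Ideal.mem_bot] at hmem
  exact hNne (by exact_mod_cast hmem)

set_option synthInstance.maxHeartbeats 100000 in
/-- Let `L` be a number field of degree `g = [L:ℚ]` with ring of
integers `O_L`, let `Γ` be an order of `L` with conductor `f`, let `d ≥ 1` be an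
integer, and let `Γ' = ℤ[dΓ]` with conductor `f'`.  Then `d·f ⊆ f'`: for every
`x ∈ O_L` with `x·O_L ⊆ Γ` one has `(d·x)·O_L ⊆ Γ'`.  Consequently
`N(f') ≤ d^g · N(f)`, i.e. `|O_L/f'| ≤ d^g · |O_L/f|`. -/
theorem conductor_of_subOrder
    (L : Type*) [Field L] [NumberField L]
    (g : ℕ) (hg : g = Module.finrank ℚ L)
    (Γ : Subring L) (hΓfin : Module.Finite ℤ Γ)
    (hΓspan : Submodule.span ℚ (Γ : Set L) = ⊤)
    (d : ℕ) (hd : 1 ≤ d)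
    (Γ' : Subring L) (hΓ' : Γ' = Subring.closure ((fun γ : L => (d : L) * γ) '' (Γ : Set L))) :
    (∀ x : 𝓞 L, x ∈ orderConductor L Γ → (d : 𝓞 L) * x ∈ orderConductor L Γ') ∧
    Nat.card (𝓞 L ⧸ orderConductor L Γ') ≤ d ^ g * Nat.card (𝓞 L ⧸ orderConductor L Γ) := by
  have part1 : ∀ x : 𝓞 L, x ∈ orderConductor L Γ → (d : 𝓞 L) * x ∈ orderConductor L Γ' := by
    intro x hx y
    have h : algebraMap (𝓞 L) L ((d : 𝓞 L) * x * y) =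
        (d : L) * algebraMap (𝓞 L) L (x * y) := by
      rw [mul_assoc, map_mul, map_natCast]
    rw [h, hΓ']
    exact Subring.subset_closure ⟨_, hx y, rfl⟩
  refine ⟨part1, ?_⟩
  set f := orderConductor L Γ
  set f' := orderConductor L Γ'
  have hsub : Ideal.span {(d : 𝓞 L)} * f ≤ f' := by
    rw [Ideal.span_singleton_mul_le_iff]
    exact part1
  have hdvd : Ideal.absNorm f' ∣ Ideal.absNorm (Ideal.span {(d : 𝓞 L)} * f) :=
    Ideal.absNorm_dvd_absNorm_of_le hsub
  have hnorm : Ideal.absNorm (Ideal.span {(d : 𝓞 L)} * f) = d ^ g * Ideal.absNorm f := by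
    rw [_root_.map_mul Ideal.absNorm, Ideal.absNorm_span_singleton]
    congr 1
    have hcast : (d : 𝓞 L) = algebraMap ℤ (𝓞 L) (d : ℤ) := by push_cast; rfl
    let b := Module.Free.chooseBasis ℤ (𝓞 L)
    rw [hcast, Algebra.norm_algebraMap_of_basis b]
    have hcard : Fintype.card (Module.Free.ChooseBasisIndex ℤ (𝓞 L)) = g := by
      rw [← Module.finrank_eq_card_chooseBasisIndex, RingOfIntegers.rank, hg]
    rw [hcard]
    push_cast
    rw [Int.natAbs_pow]
    simp
  have hfne : Ideal.absNorm f ≠ 0 := by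
    rw [ne_eq, Ideal.absNorm_eq_zero_iff]
    exact orderConductor_ne_bot L Γ hΓspan
  have hpos : 0 < d ^ g * Ideal.absNorm f :=
    Nat.mul_pos (Nat.pow_pos hd) (Nat.pos_of_ne_zero hfne)
  have hle : Ideal.absNorm f' ≤ d ^ g * Ideal.absNorm f :=
    Nat.le_of_dvd hpos (hnorm ▸ hdvd)
  have h1 : Nat.card (𝓞 L ⧸ f') = Ideal.absNorm f' := by
    rw [Ideal.absNorm_apply, Submodule.cardQuot_apply]
  have h2 : Nat.card (𝓞 L ⧸ f) = Ideal.absNorm f := by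
    rw [Ideal.absNorm_apply, Submodule.cardQuot_apply]
  rw [h1, h2]
  exact hle
end
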